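/- Let A ⊆ ℕ\{1\}. If L(A) ∪ {0} contains an infinite-dimensional linear subspace of ℓ∞, then there exists k ≥ 1 such that A ∩ (A − k) is infinite, i.e., there are infinitely many a ∈ A with a + k ∈ A. -/

import Mathlib

open Filter Topology Set ENNReal

noncomputable section

/-- The set of accumulation points of a real sequence: limits of convergent subsequences. -/
def accPts (x : ℕ → ℝ) : Set ℝ :=
  {a | ∃ φ : ℕ → ℕ, StrictMono φ ∧ Tendsto (fun k => x (φ k)) atTop (𝓝 a)}


/-- The space ℓ∞ of bounded real sequences. -/
abbrev Linf : Type := ↥(lp (fun _ : ℕ => ℝ) ∞)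

/-- Accumulation points of an element of ℓ∞. -/
def accPtsL (z : Linf) : Set ℝ := accPts (fun n => z n)

namespace ShiftAux

abbrev W : Type := ℕ → ℝ

def dotn (n : ℕ) (c x : W) : ℝ := ∑ i ∈ Finset.range n, c i * x i

lemma dotn_single {n j : ℕ} (hj : j < n) (x : W) :
    dotn n (Pi.single j (1:ℝ)) x = x j := by
  unfold dotn
  rw [Finset.sum_eq_single j]
  · simp
  · intro i _ hne
    simp [Pi.single_apply, hne]
  · intro h; exact absurd (Finset.mem_range.2 hj) h

lemma dotn_addl (n : ℕ) (c h x : W) : dotn n (c + h) x = dotn n c x + dotn n h x := by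
  unfold dotn
  rw [← Finset.sum_add_distrib]
  refine Finset.sum_congr rfl fun i _ => ?_
  simp [add_mul]

lemma dotn_smull (n : ℕ) (t : ℝ) (c x : W) : dotn n (t • c) x = t * dotn n c x := by
  unfold dotn
  rw [Finset.mul_sum]
  refine Finset.sum_congr rfl fun i _ => ?_
  simp [smul_eq_mul]; ring

lemma dotn_subl (n : ℕ) (c h x : W) : dotn n (c - h) x = dotn n c x - dotn n h x := by
  unfold dotn
  rw [← Finset.sum_sub_distrib]
  refine Finset.sum_congr rfl fun i _ => ?_
  simp [sub_mul]

lemma dotn_sub (n : ℕ) (c x y : W) : dotn n c (x - y) = dotn n c x - dotn n c y := by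
  unfold dotn
  rw [← Finset.sum_sub_distrib]
  refine Finset.sum_congr rfl fun i _ => ?_
  simp [mul_sub]

lemma dotn_smul (n : ℕ) (c : W) (t : ℝ) (v : W) : dotn n c (t • v) = t * dotn n c v := by
  unfold dotn
  rw [Finset.mul_sum]
  refine Finset.sum_congr rfl fun i _ => ?_
  simp [smul_eq_mul]; ring

lemma exists_sep (n : ℕ) (v d : W) (hv : ∀ i, n ≤ i → v i = 0) (hd : ∀ i, n ≤ i → d i = 0)
    (hnd : ∀ t : ℝ, d ≠ t • v) : ∃ h : W, dotn n h v = 0 ∧ dotn n h d ≠ 0 := by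
  by_cases hv0 : v = 0
  · have hdne : d ≠ 0 := by
      intro h0
      exact hnd 0 (by simp [h0, hv0])
    obtain ⟨j, hj⟩ := Function.ne_iff.1 hdne
    simp only [Pi.zero_apply] at hj
    have hjn : j < n := by
      by_contra h
      exact hj (hd j (le_of_not_gt h))
    refine ⟨Pi.single j 1, ?_, ?_⟩
    · rw [dotn_single hjn, hv0]; rfl
    · rw [dotn_single hjn]; exact hj
  · obtain ⟨i, hi⟩ := Function.ne_iff.1 hv0
    simp only [Pi.zero_apply] at hi
    have hin : i < n := by
      by_contra h
      exact hi (hv i (le_of_not_gt h))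
    set d' : W := d - (d i / v i) • v with hd'def
    have hd'ne : d' ≠ 0 := by
      intro h0
      apply hnd (d i / v i)
      have := sub_eq_zero.1 h0
      exact this
    obtain ⟨j, hj⟩ := Function.ne_iff.1 hd'ne
    simp only [Pi.zero_apply] at hj
    have hd'i : ∀ m, n ≤ m → d' m = 0 := by
      intro m hm
      simp [hd'def, hd m hm, hv m hm]
    have hjn : j < n := by
      by_contra h
      exact hj (hd'i j (le_of_not_gt h))
    refine ⟨v i • (Pi.single j 1 : W) - v j • (Pi.single i 1 : W), ?_, ?_⟩
    · rw [dotn_subl, dotn_smull, dotn_smull, dotn_single hjn, dotn_single hin]; ring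
    · rw [dotn_subl, dotn_smull, dotn_smull, dotn_single hjn, dotn_single hin]
      have hval : d' j = d j - (d i / v i) * v j := by simp [hd'def, smul_eq_mul]
      intro hcon
      apply hj
      rw [hval]
      field_simp at hcon ⊢
      linarith [hcon]

lemma exists_generic (n : ℕ) (v : W) (hv : ∀ i, n ≤ i → v i = 0) (D : Finset W)
    (hD : ∀ d ∈ D, (∀ i, n ≤ i → d i = 0) ∧ ∀ t : ℝ, d ≠ t • v) :
    ∃ c : W, dotn n c v = 0 ∧ ∀ d ∈ D, dotn n c d ≠ 0 := by
  classical
  induction D using Finset.induction_on with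
  | empty => exact ⟨0, by simp [dotn], by simp⟩
  | @insert d D hdD ih =>
    obtain ⟨c, hc0, hcD⟩ := ih (fun d' hd' => hD d' (Finset.mem_insert_of_mem hd'))
    obtain ⟨hdsup, hdne⟩ := hD d (Finset.mem_insert_self d D)
    obtain ⟨h, hh0, hhd⟩ := exists_sep n v d hv hdsup hdne
    obtain ⟨t, ht⟩ := Infinite.exists_notMem_finset
      ((insert d D).image (fun e => - dotn n c e / dotn n h e))
    refine ⟨c + t • h, ?_, ?_⟩
    · rw [dotn_addl, dotn_smull, hc0, hh0]; ring
    · intro e he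
      have hval : dotn n (c + t • h) e = dotn n c e + t * dotn n h e := by
        rw [dotn_addl, dotn_smull]
      by_cases hhe : dotn n h e = 0
      · rcases Finset.mem_insert.1 he with rfl | heD
        · exact absurd hhe hhd
        · rw [hval, hhe, mul_zero, add_zero]; exact hcD e heD
      · intro h0
        apply ht
        rw [hval] at h0
        have hteq : t = - dotn n c e / dotn n h e := by
          field_simp
          linarith
        exact Finset.mem_image.2 ⟨e, he, hteq.symm⟩


def Qm (v : W) (j : ℕ) (x : W) : W := x - (x j / v j) • v

lemma Qm_eq_of_sub_smul {v : W} {j : ℕ} (hv : v j ≠ 0) {x y : W} (t : ℝ) (h : x - y = t • v) :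
    Qm v j x = Qm v j y := by
  have hxy : ∀ i, x i = y i + t * v i := by
    intro i
    have := congrFun h i
    simp only [Pi.sub_apply, Pi.smul_apply, smul_eq_mul] at this
    linarith
  funext i
  simp only [Qm, Pi.sub_apply, Pi.smul_apply, smul_eq_mul]
  rw [hxy i, hxy j]
  field_simp
  ring

lemma Qm_eq_iff {v : W} {j : ℕ} (hv : v j ≠ 0) {x y : W} :
    Qm v j x = Qm v j y ↔ ∃ t : ℝ, x - y = t • v := by
  constructor
  · intro h
    refine ⟨(x j - y j) / v j, ?_⟩
    funext i
    have hi := congrFun h i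
    simp only [Qm, Pi.sub_apply, Pi.smul_apply, smul_eq_mul] at hi ⊢
    field_simp at hi ⊢
    linarith
  · rintro ⟨t, ht⟩
    exact Qm_eq_of_sub_smul hv t ht

lemma ncard_image_eq_of_fiber_iff {α β γ : Type*} [Nonempty α] {X : Set α} (hX : X.Finite)
    (f : α → β) (g : α → γ)
    (h : ∀ x ∈ X, ∀ y ∈ X, (f x = f y ↔ g x = g y)) :
    (f '' X).ncard = (g '' X).ncard := by
  classical
  set F : β → γ := fun bb => g (Function.invFunOn f X bb) with hF
  have hEq : Set.EqOn (F ∘ f) g X := by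
    intro x hx
    have h1 : Function.invFunOn f X (f x) ∈ X := Function.invFunOn_apply_mem hx
    have h2 : f (Function.invFunOn f X (f x)) = f x := Function.invFunOn_apply_eq hx
    exact (h _ h1 x hx).1 h2
  have himg : g '' X = F '' (f '' X) := by
    rw [Set.image_image]
    exact (Set.image_congr hEq).symm
  have hinj : Set.InjOn F (f '' X) := by
    rintro b1 ⟨x1, hx1, rfl⟩ b2 ⟨x2, hx2, rfl⟩ hFeq
    have m1 : Function.invFunOn f X (f x1) ∈ X := Function.invFunOn_apply_mem hx1
    have m2 : Function.invFunOn f X (f x2) ∈ X := Function.invFunOn_apply_mem hx2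
    have e1 : f (Function.invFunOn f X (f x1)) = f x1 := Function.invFunOn_apply_eq hx1
    have e2 : f (Function.invFunOn f X (f x2)) = f x2 := Function.invFunOn_apply_eq hx2
    have : g (Function.invFunOn f X (f x1)) = g (Function.invFunOn f X (f x2)) := hFeq
    have := (h _ m1 _ m2).2 this
    rw [e1, e2] at this
    exact this
  rw [himg, Set.ncard_image_of_injOn hinj]


def trunc (n : ℕ) (x : W) : W := fun i => if i < n then x i else 0

lemma stepA (n : ℕ) (X' : Set W) (hX' : X'.Finite)
    (hsup : ∀ x ∈ X', ∀ i, n + 1 ≤ i → x i = 0)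
    (u : W) (j : ℕ) (hj : j < n) (hu : u j ≠ 0) (husup : ∀ i, n ≤ i → u i = 0)
    (e : ℕ) (he : 1 ≤ e)
    (hcard : (trunc n '' X').ncard = (Qm u j '' (trunc n '' X')).ncard + e) :
    ∃ δ : ℝ, ∃ e', 1 ≤ e' ∧ e' ≤ e ∧
      X'.ncard = (Qm (Function.update u n δ) j '' X').ncard + e' := by
  classical
  have hjn : j ≠ n := Nat.ne_of_lt hj
  set Xb : Set W := trunc n '' X' with hXbdef
  have hXb : Xb.Finite := hX'.image _
  set s : W → ℝ := fun x => x j / u j with hsdef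
  set γ : W → ℝ := fun x => x n with hγdef
  set b : W → W := fun x => Qm u j (trunc n x) with hbdef
  have htj : ∀ x : W, (trunc n x) j = x j := by
    intro x; simp [trunc, hj]
  have hsj : ∀ x : W, s (trunc n x) = s x := by
    intro x; simp [hsdef, htj]
  -- b of a base point p = trunc n x' : Qm u j p
  have hbb : ∀ x : W, b x = Qm u j (trunc n x) := fun _ => rfl
  -- coordinates of b
  have hbcoord : ∀ (x : W) (i : ℕ), i < n → b x i = x i - s x * u i := by
    intro x i hi
    simp [hbdef, Qm, trunc, hi, hj, hsdef, smul_eq_mul]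
  have hbhigh : ∀ (x : W) (i : ℕ), n ≤ i → b x i = 0 := by
    intro x i hi
    have : ¬ i < n := not_lt.2 hi
    simp [hbdef, Qm, trunc, this, hj, husup i hi, smul_eq_mul]
  -- P1 : determination
  have P1 : ∀ x' ∈ X', ∀ y' ∈ X', b x' = b y' → s x' = s y' → γ x' = γ y' → x' = y' := by
    intro x' hx' y' hy' hb hs hγ
    funext i
    rcases lt_trichotomy i n with hi | hi | hi
    · have h1 := congrFun hb i
      rw [hbcoord x' i hi, hbcoord y' i hi, hs] at h1
      linarith
    · rw [hi] at *; exact hγ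
    · rw [hsup x' hx' i hi, hsup y' hy' i hi]
  -- the slope finset
  set Xf : Finset W := hX'.toFinset with hXfdef
  have hXfmem : ∀ x : W, x ∈ Xf ↔ x ∈ X' := by
    intro x; simp [hXfdef]
  set PF : Finset (W × W) :=
    (Xf ×ˢ Xf).filter (fun pr => b pr.1 = b pr.2 ∧ s pr.1 ≠ s pr.2) with hPFdef
  set slopes : Finset ℝ := PF.image (fun pr => (γ pr.1 - γ pr.2) / (s pr.1 - s pr.2))
    with hslopesdef
  -- nonemptiness of slopes
  have hnotinj : ¬ Set.InjOn (Qm u j) Xb := by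
    intro hinj
    rw [Set.ncard_image_of_injOn hinj] at hcard
    omega
  have hSlopesNe : slopes.Nonempty := by
    rw [Set.InjOn] at hnotinj
    push_neg at hnotinj
    obtain ⟨p, hp, q, hq, hpq, hne⟩ := hnotinj
    obtain ⟨x0, hx0, rfl⟩ := hp
    obtain ⟨y0, hy0, rfl⟩ := hq
    obtain ⟨t, htq⟩ := (Qm_eq_iff hu).1 hpq
    have htne : t ≠ 0 := by
      intro h0
      apply hne
      rw [h0, zero_smul] at htq
      exact sub_eq_zero.1 htq
    have hsne : s x0 ≠ s y0 := by
      have hjq := congrFun htq j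
      simp only [Pi.sub_apply, Pi.smul_apply, smul_eq_mul] at hjq
      rw [htj, htj] at hjq
      intro hcon
      apply htne
      have : x0 j = y0 j := by
        have := hcon
        simp only [hsdef] at this
        field_simp at this
        exact this
      rw [this] at hjq
      simp at hjq
      rcases hjq with h | h
      · exact h
      · exact absurd h hu
    have hbe : b x0 = b y0 := hpq
    refine ⟨(γ x0 - γ y0) / (s x0 - s y0), ?_⟩
    rw [hslopesdef]
    apply Finset.mem_image.2
    refine ⟨(x0, y0), ?_, rfl⟩
    rw [hPFdef]
    apply Finset.mem_filter.2
    exact ⟨Finset.mem_product.2 ⟨(hXfmem x0).2 hx0, (hXfmem y0).2 hy0⟩, hbe, hsne⟩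
  set δ : ℝ := slopes.max' hSlopesNe with hδdef
  set wv : W → ℝ := fun x => γ x - s x * δ with hwvdef
  -- max property in w form
  have hmaxw : ∀ x' ∈ X', ∀ y' ∈ X', b x' = b y' → s y' < s x' → wv x' ≤ wv y' := by
    intro x' hx' y' hy' hb hs
    have hmem : (γ x' - γ y') / (s x' - s y') ∈ slopes := by
      rw [hslopesdef]
      apply Finset.mem_image.2
      exact ⟨(x', y'), Finset.mem_filter.2
        ⟨Finset.mem_product.2 ⟨(hXfmem x').2 hx', (hXfmem y').2 hy'⟩, hb, ne_of_gt hs⟩, rfl⟩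
    have hle := slopes.le_max' _ hmem
    rw [← hδdef] at hle
    have hpos : 0 < s x' - s y' := sub_pos.2 hs
    have := (div_le_iff₀ hpos).1 hle
    simp only [hwvdef]
    nlinarith
  -- v and its properties
  set v : W := Function.update u n δ with hvdef
  have hvj : v j ≠ 0 := by
    rw [hvdef]; rw [Function.update_of_ne hjn]; exact hu
  have hvn : v n = δ := by rw [hvdef]; simp
  have hvi : ∀ i, i ≠ n → v i = u i := by
    intro i hi; rw [hvdef]; rw [Function.update_of_ne hi]
  -- E1
  have E1 : ∀ x' ∈ X', ∀ y' ∈ X',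
      (Qm v j x' = Qm v j y' ↔ (b x' = b y' ∧ wv x' = wv y')) := by
    intro x' hx' y' hy'
    rw [Qm_eq_iff hvj]
    constructor
    · rintro ⟨t, ht⟩
      have hcoord : ∀ i, x' i - y' i = t * v i := by
        intro i
        have := congrFun ht i
        simpa [Pi.sub_apply, smul_eq_mul] using this
      have htval : t = s x' - s y' := by
        have hjc := hcoord j
        rw [hvi j hjn] at hjc
        have hsx : s x' = x' j / u j := rfl
        have hsy : s y' = y' j / u j := rfl
        rw [hsx, hsy]
        field_simp
        linarith
      constructor
      · funext i
        rcases lt_trichotomy i n with hi | rfl | hi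
        · rw [hbcoord x' i hi, hbcoord y' i hi]
          have h2 := hcoord i
          rw [hvi i (Nat.ne_of_lt hi), htval] at h2
          linear_combination h2
        · rw [hbhigh x' i le_rfl, hbhigh y' i le_rfl]
        · rw [hbhigh x' i (le_of_lt hi), hbhigh y' i (le_of_lt hi)]
      · have h2 := hcoord n
        rw [hvn, htval] at h2
        show x' n - s x' * δ = y' n - s y' * δ
        linear_combination h2
    · rintro ⟨hb, hw⟩
      refine ⟨s x' - s y', ?_⟩
      funext i
      simp only [Pi.sub_apply, Pi.smul_apply, smul_eq_mul]
      rcases lt_trichotomy i n with hi | rfl | hi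
      · have h1 := congrFun hb i
        rw [hbcoord x' i hi, hbcoord y' i hi] at h1
        rw [hvi i (Nat.ne_of_lt hi)]
        linear_combination h1
      · rw [hvn]
        have hw' : x' i - s x' * δ = y' i - s y' * δ := hw
        linear_combination hw'
      · rw [hsup x' hx' i hi, hsup y' hy' i hi, hvi i (Nat.ne_of_gt hi),
          husup i (le_of_lt hi)]
        ring
  -- achieving pair
  have hδmem : δ ∈ slopes := slopes.max'_mem hSlopesNe
  obtain ⟨pr, hprPF, hpreq⟩ := Finset.mem_image.1 hδmem
  obtain ⟨hprmem, hbpr, hspr⟩ := Finset.mem_filter.1 hprPF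
  obtain ⟨hpr1, hpr2⟩ := Finset.mem_product.1 hprmem
  have hx₁ : pr.1 ∈ X' := (hXfmem _).1 hpr1
  have hy₁ : pr.2 ∈ X' := (hXfmem _).1 hpr2
  have hwx₁ : wv pr.1 = wv pr.2 := by
    have hsne : s pr.1 - s pr.2 ≠ 0 := sub_ne_zero.2 hspr
    have h2 : γ pr.1 - γ pr.2 = δ * (s pr.1 - s pr.2) := by
      rw [← hpreq, div_mul_cancel₀ _ hsne]
    show γ pr.1 - s pr.1 * δ = γ pr.2 - s pr.2 * δ
    linear_combination h2
  have hx₁y₁ : pr.1 ≠ pr.2 := by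
    intro h; exact hspr (by rw [h])
  have hQeq₁ : Qm v j pr.1 = Qm v j pr.2 := (E1 pr.1 hx₁ pr.2 hy₁).2 ⟨hbpr, hwx₁⟩
  -- Claim 1
  have himg1 : Qm v j '' X' = Qm v j '' (X' \ {pr.1}) := by
    apply Set.Subset.antisymm
    · rintro _ ⟨x', hx'm, rfl⟩
      by_cases hcase : x' = pr.1
      · subst hcase
        exact ⟨pr.2, ⟨hy₁, by simp [Set.mem_singleton_iff]; exact fun h => hx₁y₁ h.symm⟩,
          hQeq₁.symm⟩
      · exact ⟨x', ⟨hx'm, by simp [Set.mem_singleton_iff, hcase]⟩, rfl⟩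
    · exact Set.image_mono Set.diff_subset
  have hclaim1 : (Qm v j '' X').ncard + 1 ≤ X'.ncard := by
    have h1 : (Qm v j '' X').ncard ≤ (X' \ {pr.1}).ncard := by
      rw [himg1]; exact Set.ncard_image_le hX'.diff
    have h2 : (X' \ {pr.1}).ncard + 1 = X'.ncard :=
      Set.ncard_diff_singleton_add_one hx₁ hX'
    omega
  -- Claim 2
  set charged : Set W := {x' | x' ∈ X' ∧ ∃ y' ∈ X', Qm v j y' = Qm v j x' ∧ s y' < s x'}
    with hchdef
  have hchsub : charged ⊆ X' := fun x' hx' => hx'.1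
  have hinj1 : Set.InjOn (Qm v j) (X' \ charged) := by
    rintro x' ⟨hx'm, hx'nc⟩ y' ⟨hy'm, hy'nc⟩ hQ
    obtain ⟨hbeq, hweq⟩ := (E1 x' hx'm y' hy'm).1 hQ
    rcases lt_trichotomy (s x') (s y') with hs | hs | hs
    · exact absurd ⟨hy'm, x', hx'm, hQ, hs⟩ hy'nc
    · have hγeq : γ x' = γ y' := by
        have h1 : γ x' - s x' * δ = γ y' - s y' * δ := hweq
        rw [hs] at h1; linarith
      exact P1 x' hx'm y' hy'm hbeq hs hγeq
    · exact absurd ⟨hx'm, y', hy'm, hQ.symm, hs⟩ hx'nc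
  have key : ∀ a ∈ charged, ∀ b2 ∈ X', b a = b b2 → s a = s b2 → wv a < wv b2 → False := by
    rintro a ⟨haX, y', hy'X, hQ, hsy⟩ b2 hb2 hbeq hseq hlt
    obtain ⟨hby, hwy⟩ := (E1 y' hy'X a haX).1 hQ
    have hs2 : s y' < s b2 := by rw [← hseq]; exact hsy
    have hle := hmaxw b2 hb2 y' hy'X (by rw [← hbeq]; exact hby.symm) hs2
    rw [hwy] at hle
    linarith
  have hinj2 : Set.InjOn (trunc n) charged := by
    rintro x' hx'c y' hy'c hπ
    have hx'm := hx'c.1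
    have hy'm := hy'c.1
    have hbeq : b x' = b y' := by rw [hbb, hbb, hπ]
    have hseq : s x' = s y' := by rw [← hsj x', ← hsj y', hπ]
    by_contra hne
    have hγne : wv x' ≠ wv y' := by
      intro hweq
      have hγeq : γ x' = γ y' := by
        have h1 : γ x' - s x' * δ = γ y' - s y' * δ := hweq
        rw [hseq] at h1; linarith
      exact hne (P1 x' hx'm y' hy'm hbeq hseq hγeq)
    rcases lt_or_gt_of_ne hγne with h | h
    · exact key x' hx'c y' hy'm hbeq hseq h
    · exact key y' hy'c x' hx'm hbeq.symm hseq.symm h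
  set Mins : Set W := {p | p ∈ Xb ∧ ∀ q ∈ Xb, Qm u j q = Qm u j p → s p ≤ s q} with hMdef
  have hMsub : Mins ⊆ Xb := fun p hp => hp.1
  have hMinj : Set.InjOn (Qm u j) Mins := by
    rintro p ⟨hpX, hpmin⟩ q ⟨hqX, hqmin⟩ hQ
    have h1 : s p ≤ s q := hpmin q hqX hQ.symm
    have h2 : s q ≤ s p := hqmin p hpX hQ
    have hs : s p = s q := le_antisymm h1 h2
    obtain ⟨t, htpq⟩ := (Qm_eq_iff hu).1 hQ
    have hjc := congrFun htpq j
    simp only [Pi.sub_apply, Pi.smul_apply, smul_eq_mul] at hjc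
    have hpj : p j = q j := by
      have h3 : p j / u j = q j / u j := hs
      field_simp at h3; exact h3
    have ht0 : t = 0 := by
      rw [hpj] at hjc
      simp only [sub_self] at hjc
      rcases mul_eq_zero.1 hjc.symm with h | h
      · exact h
      · exact absurd h hu
    rw [ht0, zero_smul] at htpq
    exact sub_eq_zero.1 htpq
  have hMimg : Qm u j '' Mins = Qm u j '' Xb := by
    apply Set.Subset.antisymm (Set.image_mono hMsub)
    rintro _ ⟨p, hp, rfl⟩
    set C : Finset W := hXb.toFinset.filter (fun q => Qm u j q = Qm u j p) with hCdef
    have hCne : C.Nonempty := ⟨p, Finset.mem_filter.2 ⟨hXb.mem_toFinset.2 hp, rfl⟩⟩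
    obtain ⟨m, hmC, hmmin⟩ := C.exists_min_image s hCne
    obtain ⟨hmX, hmQ⟩ := Finset.mem_filter.1 hmC
    refine ⟨m, ⟨hXb.mem_toFinset.1 hmX, ?_⟩, hmQ⟩
    intro q hq hQq
    exact hmmin q (Finset.mem_filter.2 ⟨hXb.mem_toFinset.2 hq, by rw [hQq, hmQ]⟩)
  have hπch : trunc n '' charged ⊆ Xb \ Mins := by
    rintro _ ⟨x', hx'c, rfl⟩
    obtain ⟨hx'm, y', hy'm, hQ, hsy⟩ := hx'c
    refine ⟨⟨x', hx'm, rfl⟩, ?_⟩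
    rintro ⟨-, hmin⟩
    obtain ⟨hby, hwy⟩ := (E1 y' hy'm x' hx'm).1 hQ
    have hQb : Qm u j (trunc n y') = Qm u j (trunc n x') := by
      rw [← hbb, ← hbb, hby]
    have h5 := hmin (trunc n y') ⟨y', hy'm, rfl⟩ hQb
    rw [hsj, hsj] at h5
    linarith
  have c1 : (X' \ charged).ncard + charged.ncard = X'.ncard :=
    Set.ncard_diff_add_ncard_of_subset hchsub hX'
  have c2 : (X' \ charged).ncard ≤ (Qm v j '' X').ncard := by
    rw [← Set.ncard_image_of_injOn hinj1]
    exact Set.ncard_le_ncard (Set.image_mono Set.diff_subset) (hX'.image _)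
  have c3 : charged.ncard ≤ e := by
    have h1 : charged.ncard = (trunc n '' charged).ncard :=
      (Set.ncard_image_of_injOn hinj2).symm
    have h2 : (trunc n '' charged).ncard ≤ (Xb \ Mins).ncard :=
      Set.ncard_le_ncard hπch hXb.diff
    have h3 : (Xb \ Mins).ncard + Mins.ncard = Xb.ncard :=
      Set.ncard_diff_add_ncard_of_subset hMsub hXb
    have h4 : Mins.ncard = (Qm u j '' Xb).ncard := by
      rw [← hMimg, Set.ncard_image_of_injOn hMinj]
    omega
  have hgoal : ∃ e', 1 ≤ e' ∧ e' ≤ e ∧ X'.ncard = (Qm v j '' X').ncard + e' := by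
    refine ⟨X'.ncard - (Qm v j '' X').ncard, ?_, ?_, ?_⟩
    · omega
    · omega
    · omega
  rw [hvdef] at hgoal
  exact ⟨δ, hgoal⟩


variable {z : ℕ → Linf}

def Tz (z : ℕ → Linf) (n m : ℕ) : W := fun i => if i < n then z i m else 0

def XXz (z : ℕ → Linf) (n : ℕ) : Set W :=
  {x | ∃ φ : ℕ → ℕ, StrictMono φ ∧ Tendsto (fun k => Tz z n (φ k)) atTop (𝓝 x)}

def Kz (z : ℕ → Linf) : Set W := Set.pi Set.univ (fun i => Icc (-‖z i‖) ‖z i‖)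

lemma Kz_compact : IsCompact (Kz z) := isCompact_univ_pi fun _ => isCompact_Icc

lemma Tz_mem_K (n m : ℕ) : Tz z n m ∈ Kz z := by
  intro i _
  simp only [Tz]
  by_cases hi : i < n
  · rw [if_pos hi]
    have h1 : ‖(z i) m‖ ≤ ‖z i‖ := lp.norm_apply_le_norm ENNReal.top_ne_zero (z i) m
    rw [Real.norm_eq_abs] at h1
    exact abs_le.1 h1
  · rw [if_neg hi]
    exact ⟨neg_nonpos.2 (norm_nonneg _), norm_nonneg _⟩

lemma XXz_coord_zero {x : W} {n : ℕ} (hx : x ∈ XXz z n) {i : ℕ} (hi : n ≤ i) : x i = 0 := by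
  obtain ⟨φ, hφ, ht⟩ := hx
  have hcoord := tendsto_pi_nhds.1 ht i
  have heq : (fun k => Tz z n (φ k) i) = fun _ => (0:ℝ) := by
    funext k; simp [Tz, not_lt.2 hi]
  rw [heq] at hcoord
  exact (tendsto_nhds_unique tendsto_const_nhds hcoord).symm

lemma XXz_coord_acc {x : W} {n : ℕ} (hx : x ∈ XXz z n) {i : ℕ} (hi : i < n) :
    x i ∈ accPtsL (z i) := by
  obtain ⟨φ, hφ, ht⟩ := hx
  have hcoord := tendsto_pi_nhds.1 ht i
  have heq : (fun k => Tz z n (φ k) i) = fun k => z i (φ k) := by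
    funext k; simp [Tz, hi]
  rw [heq] at hcoord
  exact ⟨φ, hφ, hcoord⟩

lemma XXz_finite (hz : ∀ i, (accPtsL (z i)).Finite) (n : ℕ) : (XXz z n).Finite := by
  have hsub : (fun (x : W) (i : Fin n) => x i) '' XXz z n ⊆
      Set.pi Set.univ (fun i : Fin n => accPtsL (z i)) := by
    rintro _ ⟨x, hx, rfl⟩ i _
    exact XXz_coord_acc hx i.isLt
  have hfin : ((fun (x : W) (i : Fin n) => x i) '' XXz z n).Finite :=
    (Set.Finite.pi (fun i : Fin n => hz i)).subset hsub
  apply Set.Finite.of_finite_image hfin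
  intro x hx y hy hxy
  funext i
  by_cases hi : i < n
  · exact congrFun hxy ⟨i, hi⟩
  · rw [XXz_coord_zero hx (le_of_not_gt hi), XXz_coord_zero hy (le_of_not_gt hi)]

lemma XXz_nonempty (n : ℕ) : (XXz z n).Nonempty := by
  obtain ⟨a, _, φ, hφ, ht⟩ := Kz_compact.tendsto_subseq (fun m => Tz_mem_K (z := z) n m)
  exact ⟨a, φ, hφ, ht⟩

lemma XXz_trunc (n : ℕ) : trunc n '' XXz z (n+1) = XXz z n := by
  apply Set.Subset.antisymm
  · rintro _ ⟨x, ⟨φ, hφ, ht⟩, rfl⟩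
    refine ⟨φ, hφ, ?_⟩
    rw [tendsto_pi_nhds]
    intro i
    have hcoord := tendsto_pi_nhds.1 ht i
    by_cases hi : i < n
    · have heq : (fun k => Tz z n (φ k) i) = fun k => Tz z (n+1) (φ k) i := by
        funext k; simp [Tz, hi, Nat.lt_succ_of_lt hi]
      rw [heq]
      have : trunc n x i = x i := by simp [trunc, hi]
      rw [this]
      exact hcoord
    · have heq : (fun k => Tz z n (φ k) i) = fun _ => (0:ℝ) := by
        funext k; simp [Tz, hi]
      rw [heq]
      have : trunc n x i = 0 := by simp [trunc, hi]
      rw [this]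
      exact tendsto_const_nhds
  · rintro q ⟨φ, hφ, ht⟩
    obtain ⟨y, _, ψ, hψ, hty⟩ :=
      Kz_compact.tendsto_subseq (fun k => Tz_mem_K (z := z) (n+1) (φ k))
    have hymem : y ∈ XXz z (n+1) := ⟨φ ∘ ψ, hφ.comp hψ, hty⟩
    refine ⟨y, hymem, ?_⟩
    funext i
    by_cases hi : i < n
    · have h1 : Tendsto (fun k => Tz z (n+1) (φ (ψ k)) i) atTop (𝓝 (y i)) :=
        tendsto_pi_nhds.1 hty i
      have h2 : Tendsto (fun k => Tz z n (φ (ψ k)) i) atTop (𝓝 (q i)) :=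
        (tendsto_pi_nhds.1 ht i).comp hψ.tendsto_atTop
      have heq : (fun k => Tz z (n+1) (φ (ψ k)) i) = fun k => Tz z n (φ (ψ k)) i := by
        funext k; simp [Tz, hi, Nat.lt_succ_of_lt hi]
      rw [heq] at h1
      have : y i = q i := tendsto_nhds_unique h1 h2
      simp [trunc, hi, this]
    · have h1 : q i = 0 := XXz_coord_zero ⟨φ, hφ, ht⟩ (le_of_not_gt hi)
      simp [trunc, hi, h1]

lemma dot_tendsto (n : ℕ) (c : W) {g : ℕ → W} {y : W} (hg : Tendsto g atTop (𝓝 y)) :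
    Tendsto (fun k => dotn n c (g k)) atTop (𝓝 (dotn n c y)) := by
  have hcoord := tendsto_pi_nhds.1 hg
  unfold dotn
  apply tendsto_finset_sum
  intro i _
  exact (hcoord i).const_mul (c i)

lemma combo_coe (c : W) (n m : ℕ) :
    (↑(∑ i ∈ Finset.range n, c i • z i) : ℕ → ℝ) m = dotn n c (Tz z n m) := by
  rw [lp.coeFn_sum]
  rw [Finset.sum_apply]
  unfold dotn Tz
  refine Finset.sum_congr rfl fun i hi => ?_
  rw [lp.coeFn_smul, Pi.smul_apply, smul_eq_mul, if_pos (Finset.mem_range.1 hi)]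

lemma accPts_combo (c : W) (n : ℕ) :
    accPtsL (∑ i ∈ Finset.range n, c i • z i) = (fun x => dotn n c x) '' XXz z n := by
  apply Set.Subset.antisymm
  · rintro a ⟨φ, hφ, ht⟩
    have ht' : Tendsto (fun k => dotn n c (Tz z n (φ k))) atTop (𝓝 a) := by
      have heq : (fun k => ((∑ i ∈ Finset.range n, c i • z i : Linf) : ℕ → ℝ) (φ k))
          = fun k => dotn n c (Tz z n (φ k)) := by
        funext k; exact combo_coe c n (φ k)
      rw [← heq]
      exact ht
    obtain ⟨y, _, ψ, hψ, hty⟩ :=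
      Kz_compact.tendsto_subseq (fun k => Tz_mem_K (z := z) n (φ k))
    have hymem : y ∈ XXz z n := ⟨φ ∘ ψ, hφ.comp hψ, hty⟩
    have h1 : Tendsto (fun k => dotn n c (Tz z n (φ (ψ k)))) atTop (𝓝 (dotn n c y)) :=
      dot_tendsto n c hty
    have h2 : Tendsto (fun k => dotn n c (Tz z n (φ (ψ k)))) atTop (𝓝 a) :=
      ht'.comp hψ.tendsto_atTop
    exact ⟨y, hymem, tendsto_nhds_unique h1 h2⟩
  · rintro _ ⟨x, ⟨φ, hφ, ht⟩, rfl⟩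
    refine ⟨φ, hφ, ?_⟩
    have heq : (fun k => ((∑ i ∈ Finset.range n, c i • z i : Linf) : ℕ → ℝ) (φ k))
        = fun k => dotn n c (Tz z n (φ k)) := by
      funext k; exact combo_coe c n (φ k)
    rw [show (fun k => ((∑ i ∈ Finset.range n, c i • z i : Linf) : ℕ → ℝ) (φ k))
        = fun k => dotn n c (Tz z n (φ k)) from heq]
    exact dot_tendsto n c ht


lemma nat_antitone_stab (c : ℕ → ℕ) (h : ∀ n, c (n+1) ≤ c n) :
    ∃ N, ∀ n, N ≤ n → c n = c N := by
  have hmono : ∀ m n, m ≤ n → c n ≤ c m := by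
    intro m n hmn
    induction n, hmn using Nat.le_induction with
    | base => exact le_refl _
    | succ n hmn ih => exact le_trans (h n) ih
  obtain ⟨N, hN⟩ : ∃ N, c N = sInf (Set.range c) := by
    obtain ⟨N, hN⟩ := Nat.sInf_mem (Set.range_nonempty c)
    exact ⟨N, hN⟩
  refine ⟨N, fun n hn => ?_⟩
  have h1 : c n ≤ c N := hmono N n hn
  have h2 : sInf (Set.range c) ≤ c n := Nat.sInf_le ⟨n, rfl⟩
  omega

lemma infinite_of_unbounded (S : Set ℕ) (h : ∀ B, ∃ a ∈ S, B ≤ a) : S.Infinite := by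
  by_contra hfin
  rw [Set.not_infinite] at hfin
  obtain ⟨B, hB⟩ := hfin.bddAbove
  obtain ⟨a, haS, hBa⟩ := h (B + 1)
  have := hB haS
  omega

set_option synthInstance.maxHeartbeats 1000000 in
lemma exists_indep_seq (M : Submodule ℝ Linf) (hinf : ¬ Module.Finite ℝ M) :
    ∃ z : ℕ → Linf, (∀ i, z i ∈ M) ∧ LinearIndependent ℝ z := by
  haveI : Module.Free ℝ ↥M := Module.Free.of_divisionRing ℝ ↥M
  have h1 : Cardinal.aleph0 ≤ Module.rank ℝ ↥M := by
    by_contra h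
    push_neg at h
    exact hinf (Module.rank_lt_aleph0_iff.1 h)
  obtain ⟨s, hs, hli⟩ := (le_rank_iff_exists_linearIndependent (K := ℝ) (V := ↥M)).1 h1
  have hne : Nonempty (ℕ ≃ ↥s) := Cardinal.eq.1 (by rw [Cardinal.mk_nat, hs])
  obtain ⟨e⟩ := hne
  have hli2 : LinearIndependent ℝ ((fun x : ↥s => (x : ↥M)) ∘ e) := hli.comp e e.injective
  have hli3 := hli2.map' M.subtype (Submodule.ker_subtype M)
  exact ⟨fun n => ((e n : ↥M) : Linf), fun n => (e n : ↥M).2, hli3⟩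


end ShiftAux

open ShiftAux

theorem lineable_implies_shift_infinite (A : Set ℕ) (hA : A ⊆ {n | 2 ≤ n})
    (M : Submodule ℝ Linf) (hinf : ¬ Module.Finite ℝ M)
    (hM : ∀ z ∈ M, z ≠ 0 → (accPtsL z).Finite ∧ (accPtsL z).ncard ∈ A) :
    ∃ k : ℕ, 1 ≤ k ∧ {a ∈ A | a + k ∈ A}.Infinite := by
  classical
  obtain ⟨z, hzM, hzli⟩ := exists_indep_seq M hinf
  have hzne : ∀ i, z i ≠ 0 := fun i => hzli.ne_zero i
  have hLfin : ∀ i, (accPtsL (z i)).Finite := fun i => (hM (z i) (hzM i) (hzne i)).1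
  set X : ℕ → Set W := fun n => XXz z n with hXdef
  have hXfin : ∀ n, (X n).Finite := fun n => XXz_finite hLfin n
  -- combination counts are in A
  have hcombo : ∀ (n : ℕ) (c : W), (∃ i, i < n ∧ c i ≠ 0) →
      ((fun x => dotn n c x) '' X n).ncard ∈ A := by
    rintro n c ⟨i0, hi0, hci0⟩
    have hwmem : (∑ i ∈ Finset.range n, c i • z i) ∈ M :=
      Submodule.sum_mem M (fun i _ => Submodule.smul_mem M _ (hzM i))
    have hwne : (∑ i ∈ Finset.range n, c i • z i) ≠ 0 := by
      intro h0
      exact hci0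
        (linearIndependent_iff'.1 hzli (Finset.range n) c h0 i0 (Finset.mem_range.2 hi0))
    have hmem := (hM _ hwmem hwne).2
    rwa [accPts_combo] at hmem
  -- lower bound on the size
  have hp_lb : ∀ n, n ≤ (X n).ncard := by
    intro n
    set F := (hXfin n).toFinset with hFdef
    set ext : (Fin n → ℝ) → W := fun c i => if h : i < n then c ⟨i, h⟩ else 0 with hextdef
    have hext_add : ∀ c c', ext (c + c') = ext c + ext c' := by
      intro c c'; funext i; by_cases h : i < n <;> simp [hextdef, h]
    have hext_smul : ∀ (t : ℝ) c, ext (t • c) = t • ext c := by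
      intro t c; funext i; by_cases h : i < n <;> simp [hextdef, h]
    set Φ : (Fin n → ℝ) →ₗ[ℝ] (↥F → ℝ) :=
      { toFun := fun c q => dotn n (ext c) (q : W)
        map_add' := by
          intro c c'
          funext q
          simp only [hext_add, dotn_addl, Pi.add_apply]
        map_smul' := by
          intro t c
          funext q
          simp only [hext_smul, dotn_smull, Pi.smul_apply, smul_eq_mul, RingHom.id_apply] }
      with hPhidef
    have hΦinj : Function.Injective Φ := by
      rw [injective_iff_map_eq_zero]
      intro c hc
      by_contra hc0
      obtain ⟨i0, hci0⟩ := Function.ne_iff.1 hc0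
      have hvalc : ext c i0 ≠ 0 := by
        simp only [hextdef, i0.isLt, dif_pos]
        simpa using hci0
      have hAmem := hcombo n (ext c) ⟨(i0 : ℕ), i0.isLt, hvalc⟩
      have hzero : ∀ q ∈ X n, dotn n (ext c) q = 0 := by
        intro q hq
        have := congrFun hc (⟨q, (hXfin n).mem_toFinset.2 hq⟩ : ↥F)
        exact this
      obtain ⟨q0, hq0⟩ := XXz_nonempty (z := z) n
      have himg : (fun x => dotn n (ext c) x) '' X n = {0} := by
        apply Set.Subset.antisymm
        · rintro _ ⟨q, hq, rfl⟩
          simp [hzero q hq]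
        · intro a ha
          rw [Set.mem_singleton_iff] at ha
          exact ⟨q0, hq0, (hzero q0 hq0).trans ha.symm⟩
      rw [himg, Set.ncard_singleton] at hAmem
      have := hA hAmem
      simp at this
    have hcard : Fintype.card ↥F = (X n).ncard := by
      rw [Set.ncard_eq_toFinset_card _ (hXfin n)]
      exact Fintype.card_coe F
    calc n = Module.finrank ℝ (Fin n → ℝ) := by simp [Module.finrank_pi]
    _ ≤ Module.finrank ℝ (↥F → ℝ) := LinearMap.finrank_le_finrank_of_injective hΦinj
    _ = Fintype.card ↥F := by simp [Module.finrank_pi]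
    _ = (X n).ncard := hcard
  -- two distinct points
  have htwo : ∀ n, 2 ≤ n → ∃ x ∈ X n, ∃ y ∈ X n, x ≠ y := by
    intro n hn
    have h1 : 1 < (X n).ncard := by
      have := hp_lb n; omega
    exact (Set.one_lt_ncard (hXfin n)).1 h1
  -- the excess sets
  set S : ℕ → Set ℕ := fun n => {e | 1 ≤ e ∧ ∃ v : W, ∃ j : ℕ, j < n ∧ v j ≠ 0 ∧
    (∀ i, n ≤ i → v i = 0) ∧ (X n).ncard = (Qm v j '' X n).ncard + e} with hSdef
  have hSne : ∀ n, 2 ≤ n → (S n).Nonempty := by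
    intro n hn
    obtain ⟨x, hx, y, hy, hxy⟩ := htwo n hn
    set v : W := x - y with hvdef
    have hvne : v ≠ 0 := sub_ne_zero.2 hxy
    obtain ⟨j, hj⟩ := Function.ne_iff.1 hvne
    simp only [Pi.zero_apply] at hj
    have hjn : j < n := by
      by_contra hcon
      apply hj
      simp [hvdef, Pi.sub_apply, XXz_coord_zero hx (le_of_not_gt hcon),
        XXz_coord_zero hy (le_of_not_gt hcon)]
    have hvsupp : ∀ i, n ≤ i → v i = 0 := by
      intro i hi
      simp [hvdef, Pi.sub_apply, XXz_coord_zero hx hi, XXz_coord_zero hy hi]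
    have hQxy : Qm v j x = Qm v j y := Qm_eq_of_sub_smul hj 1 (by rw [one_smul])
    have himg : Qm v j '' X n = Qm v j '' (X n \ {x}) := by
      apply Set.Subset.antisymm
      · rintro _ ⟨q, hq, rfl⟩
        by_cases hcase : q = x
        · subst hcase
          exact ⟨y, ⟨hy, by simp [Set.mem_singleton_iff]; exact fun h => hxy h.symm⟩, hQxy.symm⟩
        · exact ⟨q, ⟨hq, by simp [Set.mem_singleton_iff, hcase]⟩, rfl⟩
      · exact Set.image_mono Set.diff_subset
    have hle : (Qm v j '' X n).ncard + 1 ≤ (X n).ncard := by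
      have h1 : (Qm v j '' X n).ncard ≤ (X n \ {x}).ncard := by
        rw [himg]; exact Set.ncard_image_le (hXfin n).diff
      have h2 : (X n \ {x}).ncard + 1 = (X n).ncard :=
        Set.ncard_diff_singleton_add_one hx (hXfin n)
      omega
    exact ⟨(X n).ncard - (Qm v j '' X n).ncard, by omega, v, j, hjn, hj, hvsupp, by omega⟩
  -- one-step control of the minimal excess
  have hstep : ∀ n, ∀ e ∈ S n, ∃ e' ∈ S (n+1), e' ≤ e := by
    intro n e he
    obtain ⟨he1, v, j, hj, hvj, hvsupp, heq⟩ := he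
    have hsup : ∀ x ∈ X (n+1), ∀ i, n + 1 ≤ i → x i = 0 :=
      fun x hx i hi => XXz_coord_zero hx hi
    have hcard : (trunc n '' X (n+1)).ncard = (Qm v j '' (trunc n '' X (n+1))).ncard + e := by
      rw [show trunc n '' X (n+1) = X n from XXz_trunc n]
      exact heq
    obtain ⟨δ, e', he'1, he'le, he'eq⟩ :=
      stepA n (X (n+1)) (hXfin (n+1)) hsup v j hj hvj hvsupp e he1 hcard
    refine ⟨e', ⟨he'1, Function.update v n δ, j, ?_, ?_, ?_, he'eq⟩, he'le⟩
    · omega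
    · rw [Function.update_of_ne (Nat.ne_of_lt hj)]; exact hvj
    · intro i hi
      rw [Function.update_of_ne (by omega)]
      exact hvsupp i (by omega)
  -- realization of the generic count
  have hpA : ∀ n, 2 ≤ n → (X n).ncard ∈ A := by
    intro n hn
    obtain ⟨x0, hx0, y0, hy0, hxy0⟩ := htwo n hn
    set D : Finset W :=
      (((hXfin n).toFinset ×ˢ (hXfin n).toFinset).filter (fun p => p.1 ≠ p.2)).image
        (fun p => p.1 - p.2) with hDdef
    have hDprop : ∀ d ∈ D, (∀ i, n ≤ i → d i = 0) ∧ ∀ t : ℝ, d ≠ t • (0 : W) := by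
      intro d hd
      obtain ⟨p, hp, rfl⟩ := Finset.mem_image.1 hd
      obtain ⟨hpmem, hpne⟩ := Finset.mem_filter.1 hp
      obtain ⟨hp1, hp2⟩ := Finset.mem_product.1 hpmem
      have h1 : p.1 ∈ X n := (hXfin n).mem_toFinset.1 hp1
      have h2 : p.2 ∈ X n := (hXfin n).mem_toFinset.1 hp2
      constructor
      · intro i hi
        simp [Pi.sub_apply, XXz_coord_zero h1 hi, XXz_coord_zero h2 hi]
      · intro t hteq
        rw [smul_zero] at hteq
        exact hpne (sub_eq_zero.1 hteq)
    obtain ⟨c, -, hcD⟩ := exists_generic n 0 (fun i _ => rfl) D hDprop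
    have hinj : Set.InjOn (fun x => dotn n c x) (X n) := by
      intro x hx y hy hxy
      by_contra hne
      have hdmem : x - y ∈ D := Finset.mem_image.2 ⟨(x, y), Finset.mem_filter.2
        ⟨Finset.mem_product.2 ⟨(hXfin n).mem_toFinset.2 hx, (hXfin n).mem_toFinset.2 hy⟩,
          hne⟩, rfl⟩
      have hcd := hcD _ hdmem
      rw [dotn_sub] at hcd
      exact hcd (sub_eq_zero.2 hxy)
    have hcne : ∃ i, i < n ∧ c i ≠ 0 := by
      by_contra hall
      push_neg at hall
      have hz0 : ∀ x : W, dotn n c x = 0 := by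
        intro x
        apply Finset.sum_eq_zero
        intro i hi
        rw [hall i (Finset.mem_range.1 hi), zero_mul]
      exact hxy0 (hinj hx0 hy0 (by show dotn n c x0 = dotn n c y0; rw [hz0, hz0]))
    have hmem := hcombo n c hcne
    rwa [Set.ncard_image_of_injOn hinj] at hmem
  -- realization of counts with excess
  have heA : ∀ n, 2 ≤ n → ∀ e ∈ S n, ∃ a, a ∈ A ∧ a + e = (X n).ncard := by
    intro n hn e he
    obtain ⟨he1, v, j, hj, hvj, hvsupp, heq⟩ := he
    set D : Finset W :=
      (((hXfin n).toFinset ×ˢ (hXfin n).toFinset).filter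
        (fun p => Qm v j p.1 ≠ Qm v j p.2)).image (fun p => p.1 - p.2) with hDdef
    have hDprop : ∀ d ∈ D, (∀ i, n ≤ i → d i = 0) ∧ ∀ t : ℝ, d ≠ t • v := by
      intro d hd
      obtain ⟨p, hp, rfl⟩ := Finset.mem_image.1 hd
      obtain ⟨hpmem, hpne⟩ := Finset.mem_filter.1 hp
      obtain ⟨hp1, hp2⟩ := Finset.mem_product.1 hpmem
      have h1 : p.1 ∈ X n := (hXfin n).mem_toFinset.1 hp1
      have h2 : p.2 ∈ X n := (hXfin n).mem_toFinset.1 hp2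
      constructor
      · intro i hi
        simp [Pi.sub_apply, XXz_coord_zero h1 hi, XXz_coord_zero h2 hi]
      · intro t hteq
        exact hpne (Qm_eq_of_sub_smul hvj t hteq)
    obtain ⟨c, hcv, hcD⟩ := exists_generic n v hvsupp D hDprop
    have hfib : ∀ x ∈ X n, ∀ y ∈ X n,
        ((fun w => dotn n c w) x = (fun w => dotn n c w) y ↔ Qm v j x = Qm v j y) := by
      intro x hx y hy
      constructor
      · intro hd
        by_contra hne
        have hdmem : x - y ∈ D := Finset.mem_image.2 ⟨(x, y), Finset.mem_filter.2
          ⟨Finset.mem_product.2 ⟨(hXfin n).mem_toFinset.2 hx, (hXfin n).mem_toFinset.2 hy⟩,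
            hne⟩, rfl⟩
        have hcd := hcD _ hdmem
        rw [dotn_sub] at hcd
        exact hcd (sub_eq_zero.2 hd)
      · intro hQxy
        obtain ⟨t, ht⟩ := (Qm_eq_iff hvj).1 hQxy
        have hzero : dotn n c (x - y) = 0 := by rw [ht, dotn_smul, hcv, mul_zero]
        rw [dotn_sub] at hzero
        show dotn n c x = dotn n c y
        linarith
    have hcne : ∃ i, i < n ∧ c i ≠ 0 := by
      by_contra hall
      push_neg at hall
      have hz0 : ∀ x : W, dotn n c x = 0 := by
        intro x
        apply Finset.sum_eq_zero
        intro i hi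
        rw [hall i (Finset.mem_range.1 hi), zero_mul]
      have hQall : ∀ x ∈ X n, ∀ y ∈ X n, Qm v j x = Qm v j y := by
        intro x hx y hy
        exact (hfib x hx y hy).1 (by show dotn n c x = dotn n c y; rw [hz0, hz0])
      obtain ⟨j2, hj2n, hj2ne⟩ : ∃ j2, j2 < n ∧ j2 ≠ j := by
        by_cases hjz : j = 0
        · exact ⟨1, by omega, by omega⟩
        · exact ⟨0, by omega, by omega⟩
      set c' : W := v j • (Pi.single j2 1 : W) - v j2 • (Pi.single j 1 : W) with hc'def
      have hc'v : dotn n c' v = 0 := by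
        rw [hc'def, dotn_subl, dotn_smull, dotn_smull, dotn_single hj2n, dotn_single hj]
        ring
      have hc'j2 : c' j2 ≠ 0 := by
        rw [hc'def]
        simp [Pi.single_apply, hj2ne]
        exact hvj
      have hc'img := hcombo n c' ⟨j2, hj2n, hc'j2⟩
      obtain ⟨q0, hq0⟩ := XXz_nonempty (z := z) n
      have hconst : ∀ x ∈ X n, dotn n c' x = dotn n c' q0 := by
        intro x hx
        obtain ⟨t, ht⟩ := (Qm_eq_iff hvj).1 (hQall x hx q0 hq0)
        have hzero : dotn n c' (x - q0) = 0 := by rw [ht, dotn_smul, hc'v, mul_zero]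
        rw [dotn_sub] at hzero
        linarith
      have himg : (fun x => dotn n c' x) '' X n = {dotn n c' q0} := by
        apply Set.Subset.antisymm
        · rintro _ ⟨q, hq, rfl⟩
          simp [hconst q hq]
        · intro a ha
          rw [Set.mem_singleton_iff] at ha
          exact ⟨q0, hq0, ha.symm⟩
      rw [himg, Set.ncard_singleton] at hc'img
      have := hA hc'img
      simp at this
    have hmem := hcombo n c hcne
    rw [ncard_image_eq_of_fiber_iff (hXfin n) (fun w => dotn n c w) (Qm v j) hfib] at hmem
    exact ⟨(Qm v j '' X n).ncard, hmem, by omega⟩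
  -- minimal excess stabilizes
  set cs : ℕ → ℕ := fun m => sInf (S (m+2)) with hcsdef
  have hcsmem : ∀ m, cs m ∈ S (m+2) := fun m => Nat.sInf_mem (hSne (m+2) (by omega))
  have hcsanti : ∀ m, cs (m+1) ≤ cs m := by
    intro m
    obtain ⟨e', he'mem, he'le⟩ := hstep (m+2) (cs m) (hcsmem m)
    exact le_trans (Nat.sInf_le he'mem) he'le
  obtain ⟨N, hN⟩ := nat_antitone_stab cs hcsanti
  refine ⟨cs N, (hcsmem N).1, ?_⟩
  apply infinite_of_unbounded
  intro B
  set m := max N (B + cs N) with hmdef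
  have hcsm : cs m = cs N := hN m (le_max_left _ _)
  have hmemS : cs N ∈ S (m+2) := by rw [← hcsm]; exact hcsmem m
  obtain ⟨a, haA, haeq⟩ := heA (m+2) (by omega) (cs N) hmemS
  have hpa : (X (m+2)).ncard ∈ A := hpA (m+2) (by omega)
  have hplb := hp_lb (m+2)
  refine ⟨a, Set.mem_sep_iff.2 ⟨haA, ?_⟩, ?_⟩
  · rw [haeq]; exact hpa
  · have hmge : B + cs N ≤ m := le_max_right _ _
    omega
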